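/- Let (X, 𝔐, μ) be a positive measure space, p ∈ [1,∞), w : X → 𝕂 a measurable weight with φ·w ∈ L^p(μ) for all φ ∈ L^p(μ), and f : X → X a bimeasurable map for which there is a constant c ∈ (0,∞) with ∫_A |w|^p dμ ≤ c·μ(f(A)) for every A ∈ 𝔐. Then for every A ∈ 𝔐 and every n ∈ ℕ, μ_n(A) ≤ cⁿ · μ(fⁿ(A)), where μ₁(A) := ∫_A |w|^p dμ and μ_n(A) := ∫_A |w∘f^{n-1}|^p ⋯ |w∘f|^p |w|^p dμ for n ≥ 2. -/

import Mathlib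

open Filter Topology MeasureTheory ENNReal

noncomputable section

def LiYorkePair {M : Type*} [PseudoMetricSpace M] (g : M → M) (x y : M) : Prop :=
  Filter.liminf (fun n : ℕ => edist (g^[n] x) (g^[n] y)) Filter.atTop = 0 ∧
  0 < Filter.limsup (fun n : ℕ => edist (g^[n] x) (g^[n] y)) Filter.atTop

def LiYorkeChaotic {M : Type*} [PseudoMetricSpace M] (g : M → M) : Prop :=
  ∃ S : Set M, ¬ S.Countable ∧ S.Pairwise (LiYorkePair g)

def DenselyLiYorkeChaotic {M : Type*} [PseudoMetricSpace M] (g : M → M) : Prop :=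
  ∃ S : Set M, Dense S ∧ ¬ S.Countable ∧ S.Pairwise (LiYorkePair g)

theorem mu_n_le_pow_mul_image
    {𝕂 : Type} [RCLike 𝕂] {X : Type} [MeasurableSpace X] (μ : Measure X)
    (p : ℝ≥0∞) (hp1 : 1 ≤ p) (hp2 : p ≠ ⊤)
    (w : X → 𝕂) (hwm : Measurable w)
    (hw : ∀ φ : X → 𝕂, MemLp φ p μ → MemLp (φ * w) p μ)
    (f : X → X) (hfm : Measurable f)
    (hfim : ∀ A : Set X, MeasurableSet A → MeasurableSet (f '' A))
    (c : ℝ) (hc : 0 < c)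
    (hbound : ∀ A : Set X, MeasurableSet A →
      ∫⁻ x in A, (‖w x‖₊ : ℝ≥0∞) ^ p.toReal ∂μ ≤ ENNReal.ofReal c * μ (f '' A)) :
    ∀ A : Set X, MeasurableSet A → ∀ n : ℕ, 0 < n →
      (∫⁻ x in A, ∏ t ∈ Finset.range n, (‖w (f^[t] x)‖₊ : ℝ≥0∞) ^ p.toReal ∂μ) ≤
        ENNReal.ofReal c ^ n * μ (f^[n] '' A) := by

  set q := p.toReal with hq
  have hWmeas : Measurable fun x => (‖w x‖₊ : ℝ≥0∞) ^ q :=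
    (hwm.nnnorm.coe_nnreal_ennreal).pow_const q
  set ν := μ.withDensity (fun x => (‖w x‖₊ : ℝ≥0∞) ^ q) with hν
  have hkey : ∀ A : Set X, MeasurableSet A →
      Measure.map f (ν.restrict A) ≤ (ENNReal.ofReal c) • μ.restrict (f '' A) := by
    intro A hA
    refine Measure.le_iff.2 fun B hB => ?_
    rw [Measure.map_apply hfm hB, Measure.smul_apply, Measure.restrict_apply (hfm hB),
        Measure.restrict_apply hB, hν, withDensity_apply _ ((hfm hB).inter hA)]
    calc ∫⁻ x in f ⁻¹' B ∩ A, (‖w x‖₊ : ℝ≥0∞) ^ q ∂μ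
        ≤ ENNReal.ofReal c * μ (f '' (f ⁻¹' B ∩ A)) := hbound _ ((hfm hB).inter hA)
      _ ≤ ENNReal.ofReal c * μ (B ∩ f '' A) := by
          gcongr
          rintro y ⟨x, ⟨hxB, hxA⟩, rfl⟩
          exact ⟨hxB, ⟨x, hxA, rfl⟩⟩
      _ = _ := rfl
  have main : ∀ n : ℕ, ∀ A : Set X, MeasurableSet A →
      (∫⁻ x in A, ∏ t ∈ Finset.range n, (‖w (f^[t] x)‖₊ : ℝ≥0∞) ^ q ∂μ) ≤
        ENNReal.ofReal c ^ n * μ (f^[n] '' A) := by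
    intro n
    induction n with
    | zero => intro A hA; simp
    | succ n ih =>
      intro A hA
      set G : X → ℝ≥0∞ := fun y => ∏ t ∈ Finset.range n, (‖w (f^[t] y)‖₊ : ℝ≥0∞) ^ q
        with hG
      have hGmeas : Measurable G := by
        apply Finset.measurable_prod
        intro t _
        exact ((hwm.comp (hfm.iterate t)).nnnorm.coe_nnreal_ennreal).pow_const q
      have hprod : ∀ x : X, (∏ t ∈ Finset.range (n + 1),
          (‖w (f^[t] x)‖₊ : ℝ≥0∞) ^ q) = (‖w x‖₊ : ℝ≥0∞) ^ q * G (f x) := by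
        intro x
        rw [Finset.prod_range_succ']
        simp only [hG, Function.iterate_succ_apply, Function.iterate_zero_apply]
        try ring
      calc (∫⁻ x in A, ∏ t ∈ Finset.range (n + 1), (‖w (f^[t] x)‖₊ : ℝ≥0∞) ^ q ∂μ)
          = ∫⁻ x in A, (‖w x‖₊ : ℝ≥0∞) ^ q * G (f x) ∂μ := by
            simp_rw [hprod]
        _ = ∫⁻ x, G (f x) ∂(ν.restrict A) := by
            rw [hν, restrict_withDensity hA]
            exact (lintegral_withDensity_eq_lintegral_mul _ hWmeas (hGmeas.comp hfm)).symm
        _ = ∫⁻ y, G y ∂(Measure.map f (ν.restrict A)) :=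
            (lintegral_map hGmeas hfm).symm
        _ ≤ ∫⁻ y, G y ∂((ENNReal.ofReal c) • μ.restrict (f '' A)) :=
            lintegral_mono' (hkey A hA) le_rfl
        _ = ENNReal.ofReal c * ∫⁻ y in f '' A, G y ∂μ := by
            rw [lintegral_smul_measure, smul_eq_mul]
        _ ≤ ENNReal.ofReal c * (ENNReal.ofReal c ^ n * μ (f^[n] '' (f '' A))) := by
            gcongr
            exact ih (f '' A) (hfim A hA)
        _ = ENNReal.ofReal c ^ (n + 1) * μ (f^[n + 1] '' A) := by
            rw [Set.image_image]
            simp_rw [← Function.iterate_succ_apply]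
            ring
  intro A hA n _
  exact main n A hA
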